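/- With finite S, A, Ω, discount γ ∈ (0,1), rewards bounded by r_max, initial distribution p₀, and a finite family of transition matrices P̂^ω for a fixed policy π with occupancy frequencies h^ω_π = (I − γ(P̂^ω_π)ᵀ)^{-1}p₀: for any compact set Ξ ⊆ Δ^Ω, the static return ρ^S(π) = min_{ξ∈Ξ} Σ_ω ξ_ω ρ(π, P̂^ω) and the dynamic return ρ^D(π) = min_{ξ∈Ξ} ρ(π, Σ_ω ξ_ω P̂^ω) satisfy |ρ^D(π) − ρ^S(π)| ≤ (γ·r_max/(1−γ))·max_{ω₁,ω₂∈Ω} ‖h^{ω₁}_π − h^{ω₂}_π‖₁. -/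
import Mathlib


open Matrix

section Aux
variable {S : Type*} [Fintype S] [DecidableEq S]

private lemma aux_det_unit (P : Matrix S S ℝ) (hP0 : ∀ s s', 0 ≤ P s s')
    (hP1 : ∀ s, ∑ s', P s s' = 1) {γ : ℝ} (hγ0 : 0 ≤ γ) (hγ1 : γ < 1) :
    IsUnit (1 - γ • P).det := by
  rw [isUnit_iff_ne_zero]
  intro hdet
  obtain ⟨v, hv, hveq⟩ := (Matrix.exists_mulVec_eq_zero_iff).2 hdet
  obtain ⟨s1, hs1⟩ : ∃ s, v s ≠ 0 := Function.ne_iff.1 hv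
  have hne : (Finset.univ : Finset S).Nonempty := ⟨s1, Finset.mem_univ s1⟩
  obtain ⟨s0, -, hs0⟩ := Finset.exists_max_image Finset.univ (fun s => |v s|) hne
  have hpos : 0 < |v s0| := lt_of_lt_of_le (abs_pos.2 hs1) (hs0 s1 (Finset.mem_univ s1))
  have hrw : (1 - γ • P) *ᵥ v = v - γ • (P *ᵥ v) := by
    rw [Matrix.sub_mulVec, Matrix.one_mulVec, Matrix.smul_mulVec]
  rw [hrw] at hveq
  have e : v s0 = γ * ∑ s', P s0 s' * v s' := by
    have := congrFun hveq s0
    simp only [Pi.sub_apply, Pi.smul_apply, smul_eq_mul, Pi.zero_apply, sub_eq_zero] at this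
    simpa [Matrix.mulVec, dotProduct] using this
  have key : |v s0| ≤ γ * |v s0| := by
    calc |v s0| = γ * |∑ s', P s0 s' * v s'| := by
          rw [e, abs_mul, abs_of_nonneg hγ0]
      _ ≤ γ * ∑ s', P s0 s' * |v s0| := by
          refine mul_le_mul_of_nonneg_left ?_ hγ0
          refine le_trans (Finset.abs_sum_le_sum_abs _ _) (Finset.sum_le_sum fun s' _ => ?_)
          rw [abs_mul, abs_of_nonneg (hP0 s0 s')]
          exact mul_le_mul_of_nonneg_left (hs0 s' (Finset.mem_univ s')) (hP0 s0 s')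
      _ = γ * |v s0| := by rw [← Finset.sum_mul, hP1 s0, one_mul]
  nlinarith

private lemma aux_fp (P : Matrix S S ℝ) {γ : ℝ} (hdet : IsUnit (1 - γ • P).det) (p : S → ℝ) :
    ((1 - γ • P)⁻¹) *ᵥ p = p + γ • (P *ᵥ (((1 - γ • P)⁻¹) *ᵥ p)) := by
  set x := ((1 - γ • P)⁻¹) *ᵥ p with hx
  have h1 : (1 - γ • P) *ᵥ x = p := by
    rw [hx, Matrix.mulVec_mulVec, Matrix.mul_nonsing_inv _ hdet, Matrix.one_mulVec]
  have h2 : (1 - γ • P) *ᵥ x = x - γ • (P *ᵥ x) := by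
    rw [Matrix.sub_mulVec, Matrix.one_mulVec, Matrix.smul_mulVec]
  rw [h2, sub_eq_iff_eq_add] at h1
  exact h1

private lemma aux_l1_convex {ι : Type*} [Fintype ι] (c : ι → ℝ) (hc : ∀ i, 0 ≤ c i)
    (f : ι → S → ℝ) :
    ∑ s, |∑ i, c i * f i s| ≤ ∑ i, c i * ∑ s, |f i s| := by
  calc ∑ s, |∑ i, c i * f i s| ≤ ∑ s, ∑ i, c i * |f i s| := by
        refine Finset.sum_le_sum fun s _ => ?_
        refine le_trans (Finset.abs_sum_le_sum_abs _ _) (Finset.sum_le_sum fun i _ => ?_)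
        rw [abs_mul, abs_of_nonneg (hc i)]
    _ = ∑ i, ∑ s, c i * |f i s| := Finset.sum_comm
    _ = ∑ i, c i * ∑ s, |f i s| := by simp [Finset.mul_sum]

private lemma aux_l1_contract (P : Matrix S S ℝ) (hP0 : ∀ s s', 0 ≤ P s s')
    (hP1 : ∀ s, ∑ s', P s s' = 1) (x : S → ℝ) :
    ∑ s, |(Pᵀ *ᵥ x) s| ≤ ∑ s, |x s| := by
  have hmv : ∀ s, (Pᵀ *ᵥ x) s = ∑ s', P s' s * x s' := by
    intro s; simp [Matrix.mulVec, dotProduct, Matrix.transpose_apply]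
  calc ∑ s, |(Pᵀ *ᵥ x) s| = ∑ s, |∑ s', P s' s * x s'| := by simp only [hmv]
    _ ≤ ∑ s, ∑ s', P s' s * |x s'| := by
        refine Finset.sum_le_sum fun s _ => ?_
        refine le_trans (Finset.abs_sum_le_sum_abs _ _) (Finset.sum_le_sum fun s' _ => ?_)
        rw [abs_mul, abs_of_nonneg (hP0 s' s)]
    _ = ∑ s', (∑ s, P s' s) * |x s'| := by
        rw [Finset.sum_comm]; simp [Finset.sum_mul]
    _ = ∑ s', |x s'| := by simp [hP1]

end Aux

/-- Static–dynamic gap bound: for a fixed policy with per-model transition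
matrices `P̂^ω`, the static soft-robust return and dynamic soft-robust return
differ by at most `(γ·r_max/(1−γ)) · max_{ω₁,ω₂} ‖h^{ω₁} − h^{ω₂}‖₁`. -/
theorem stmt_12 {S Ω : Type*} [Fintype S] [DecidableEq S] [Fintype Ω] [Nonempty Ω]
    (Phat : Ω → Matrix S S ℝ)
    (hPhat : ∀ ω, (∀ s s', 0 ≤ Phat ω s s') ∧ ∀ s, ∑ s', Phat ω s s' = 1)
    (γ : ℝ) (hγ0 : 0 ≤ γ) (hγ1 : γ < 1)
    (p0 : S → ℝ) (hp00 : ∀ s, 0 ≤ p0 s) (hp01 : ∑ s, p0 s = 1)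
    (r : S → ℝ) (rmax : ℝ) (hr : ∀ s, |r s| ≤ rmax)
    (Ξ : Set (Ω → ℝ)) (hΞne : Ξ.Nonempty) (hΞc : IsCompact Ξ)
    (hΞ : ∀ ξ ∈ Ξ, (∀ ω, 0 ≤ ξ ω) ∧ ∑ ω, ξ ω = 1)
    (h : Ω → S → ℝ) (hdef : ∀ ω, h ω = ((1 - γ • (Phat ω)ᵀ)⁻¹).mulVec p0)
    (ε1 : ℝ) (hε1 : ∀ ω1 ω2, ∑ s, |h ω1 s - h ω2 s| ≤ ε1)
    (ρS ρD : ℝ)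
    (hρS : ρS = sInf {v : ℝ | ∃ ξ ∈ Ξ, v =
        ∑ ω, ξ ω * ∑ s, p0 s * ((1 - γ • Phat ω)⁻¹).mulVec r s})
    (hρD : ρD = sInf {v : ℝ | ∃ ξ ∈ Ξ, v =
        ∑ s, p0 s * ((1 - γ • (∑ ω, ξ ω • Phat ω))⁻¹).mulVec r s}) :
    |ρD - ρS| ≤ γ * rmax / (1 - γ) * ε1 := by
  have h1γ : 0 < 1 - γ := by linarith
  -- S is nonempty
  have hSne : Nonempty S := by
    by_contra hS
    rw [not_nonempty_iff] at hS
    rw [Finset.univ_eq_empty, Finset.sum_empty] at hp01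
    exact one_ne_zero hp01.symm
  have hrmax : 0 ≤ rmax := le_trans (abs_nonneg _) (hr (Classical.arbitrary S))
  have hε1' : 0 ≤ ε1 := by
    have := hε1 (Classical.arbitrary Ω) (Classical.arbitrary Ω)
    simpa using this
  -- determinants
  have hdetT : ∀ (Q : Matrix S S ℝ), (∀ s s', 0 ≤ Q s s') → (∀ s, ∑ s', Q s s' = 1) →
      IsUnit (1 - γ • Qᵀ).det := by
    intro Q hQ0 hQ1
    have e : (1 - γ • Qᵀ) = (1 - γ • Q)ᵀ := by
      rw [Matrix.transpose_sub, Matrix.transpose_one, Matrix.transpose_smul]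
    rw [e, Matrix.det_transpose]
    exact aux_det_unit Q hQ0 hQ1 hγ0 hγ1
  -- fixed point for h ω
  have hfp : ∀ ω, h ω = p0 + γ • ((Phat ω)ᵀ *ᵥ h ω) := by
    intro ω
    have := aux_fp (Phat ω)ᵀ (hdetT (Phat ω) (hPhat ω).1 (hPhat ω).2) p0
    rw [← hdef ω] at this
    exact this
  -- ℓ¹ bound from fixed point
  have l1_of_fp : ∀ (Q : Matrix S S ℝ), (∀ s s', 0 ≤ Q s s') → (∀ s, ∑ s', Q s s' = 1) →
      ∀ x : S → ℝ, x = p0 + γ • (Qᵀ *ᵥ x) → ∑ s, |x s| ≤ 1 / (1 - γ) := by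
    intro Q hQ0 hQ1 x hx
    have hb : ∑ s, |x s| ≤ 1 + γ * ∑ s, |x s| := by
      calc ∑ s, |x s| = ∑ s, |p0 s + γ * (Qᵀ *ᵥ x) s| := by
            refine Finset.sum_congr rfl fun s _ => ?_
            conv_lhs => rw [hx]
            simp
        _ ≤ ∑ s, (|p0 s| + γ * |(Qᵀ *ᵥ x) s|) := by
            refine Finset.sum_le_sum fun s _ => ?_
            refine le_trans (abs_add_le _ _) ?_
            rw [abs_mul, abs_of_nonneg hγ0]
        _ = (∑ s, |p0 s|) + γ * ∑ s, |(Qᵀ *ᵥ x) s| := by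
            rw [Finset.sum_add_distrib, Finset.mul_sum]
        _ ≤ 1 + γ * ∑ s, |x s| := by
            have e1 : ∑ s, |p0 s| = 1 := by
              rw [← hp01]; exact Finset.sum_congr rfl fun s _ => abs_of_nonneg (hp00 s)
            have e2 := aux_l1_contract Q hQ0 hQ1 x
            have := mul_le_mul_of_nonneg_left e2 hγ0
            linarith
    rw [le_div_iff₀ h1γ]
    nlinarith
  have hl1 : ∀ ω, ∑ s, |h ω s| ≤ 1 / (1 - γ) :=
    fun ω => l1_of_fp (Phat ω) (hPhat ω).1 (hPhat ω).2 (h ω) (hfp ω)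
  -- dot product bound
  have dotb : ∀ x : S → ℝ, |∑ s, x s * r s| ≤ rmax * ∑ s, |x s| := by
    intro x
    refine le_trans (Finset.abs_sum_le_sum_abs _ _) ?_
    rw [Finset.mul_sum]
    refine Finset.sum_le_sum fun s _ => ?_
    rw [abs_mul]
    calc |x s| * |r s| ≤ |x s| * rmax := mul_le_mul_of_nonneg_left (hr s) (abs_nonneg _)
      _ = rmax * |x s| := mul_comm _ _
  -- static value identity
  have hstat : ∀ ω, ∑ s, p0 s * (((1 - γ • Phat ω)⁻¹) *ᵥ r) s = ∑ s, h ω s * r s := by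
    intro ω
    have e1 : ((1 - γ • (Phat ω)ᵀ)⁻¹) = ((1 - γ • Phat ω)⁻¹)ᵀ := by
      rw [Matrix.transpose_nonsing_inv, Matrix.transpose_sub, Matrix.transpose_one,
        Matrix.transpose_smul]
    calc ∑ s, p0 s * (((1 - γ • Phat ω)⁻¹) *ᵥ r) s
        = p0 ⬝ᵥ (((1 - γ • Phat ω)⁻¹) *ᵥ r) := rfl
      _ = (p0 ᵥ* ((1 - γ • Phat ω)⁻¹)) ⬝ᵥ r := Matrix.dotProduct_mulVec _ _ _
      _ = ((((1 - γ • Phat ω)⁻¹)ᵀ) *ᵥ p0) ⬝ᵥ r := by rw [Matrix.mulVec_transpose]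
      _ = ∑ s, h ω s * r s := by rw [← e1, ← hdef ω]; rfl
  -- abbreviations
  set aval : (Ω → ℝ) → ℝ := fun ξ => ∑ ω, ξ ω * ∑ s, h ω s * r s with haval
  set M : ℝ := rmax / (1 - γ) with hM
  have habs : ∀ ω, |∑ s, h ω s * r s| ≤ M := by
    intro ω
    refine le_trans (dotb (h ω)) ?_
    rw [hM, div_eq_mul_one_div]
    exact mul_le_mul_of_nonneg_left (hl1 ω) hrmax
  have havalb : ∀ ξ ∈ Ξ, |aval ξ| ≤ M := by
    intro ξ hξ
    obtain ⟨hξ0, hξ1⟩ := hΞ ξ hξ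
    calc |aval ξ| ≤ ∑ ω, |ξ ω * ∑ s, h ω s * r s| := Finset.abs_sum_le_sum_abs _ _
      _ ≤ ∑ ω, ξ ω * M := by
          refine Finset.sum_le_sum fun ω _ => ?_
          rw [abs_mul, abs_of_nonneg (hξ0 ω)]
          exact mul_le_mul_of_nonneg_left (habs ω) (hξ0 ω)
      _ = M := by rw [← Finset.sum_mul, hξ1, one_mul]
  -- the dynamic part, per ξ
  have keyD : ∀ ξ ∈ Ξ,
      ∃ b : ℝ, (∑ s, p0 s * (((1 - γ • (∑ ω, ξ ω • Phat ω))⁻¹) *ᵥ r) s = b) ∧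
        |b| ≤ M ∧ |b - aval ξ| ≤ γ * rmax / (1 - γ) * ε1 := by
    intro ξ hξ
    obtain ⟨hξ0, hξ1⟩ := hΞ ξ hξ
    set Pb : Matrix S S ℝ := ∑ ω, ξ ω • Phat ω with hPb
    have hPbapp : ∀ s s', Pb s s' = ∑ ω, ξ ω * Phat ω s s' := by
      intro s s'; rw [hPb]; simp [Matrix.sum_apply]
    have hPb0 : ∀ s s', 0 ≤ Pb s s' := by
      intro s s'; rw [hPbapp]
      exact Finset.sum_nonneg fun ω _ => mul_nonneg (hξ0 ω) ((hPhat ω).1 s s')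
    have hPb1 : ∀ s, ∑ s', Pb s s' = 1 := by
      intro s
      simp only [hPbapp]
      rw [Finset.sum_comm]
      calc ∑ ω, ∑ s', ξ ω * Phat ω s s' = ∑ ω, ξ ω * ∑ s', Phat ω s s' := by
            simp [Finset.mul_sum]
        _ = 1 := by simp only [(hPhat _).2]; simpa using hξ1
    set hbar : S → ℝ := ((1 - γ • Pbᵀ)⁻¹) *ᵥ p0 with hhbar
    have hbfp : hbar = p0 + γ • (Pbᵀ *ᵥ hbar) := by
      rw [hhbar]
      exact aux_fp Pbᵀ (hdetT Pb hPb0 hPb1) p0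
    -- dynamic value identity
    have hdyn : ∑ s, p0 s * (((1 - γ • Pb)⁻¹) *ᵥ r) s = ∑ s, hbar s * r s := by
      have e1 : ((1 - γ • Pbᵀ)⁻¹) = ((1 - γ • Pb)⁻¹)ᵀ := by
        rw [Matrix.transpose_nonsing_inv, Matrix.transpose_sub, Matrix.transpose_one,
          Matrix.transpose_smul]
      calc ∑ s, p0 s * (((1 - γ • Pb)⁻¹) *ᵥ r) s
          = p0 ⬝ᵥ (((1 - γ • Pb)⁻¹) *ᵥ r) := rfl
        _ = (p0 ᵥ* ((1 - γ • Pb)⁻¹)) ⬝ᵥ r := Matrix.dotProduct_mulVec _ _ _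
        _ = ((((1 - γ • Pb)⁻¹)ᵀ) *ᵥ p0) ⬝ᵥ r := by rw [Matrix.mulVec_transpose]
        _ = ∑ s, hbar s * r s := by rw [← e1, ← hhbar]; rfl
    have hbl1 : ∑ s, |hbar s| ≤ 1 / (1 - γ) := l1_of_fp Pb hPb0 hPb1 hbar hbfp
    have hbM : |∑ s, hbar s * r s| ≤ M := by
      refine le_trans (dotb hbar) ?_
      rw [hM, div_eq_mul_one_div]
      exact mul_le_mul_of_nonneg_left hbl1 hrmax
    -- g := mixture of the h ω
    set g : S → ℝ := fun s => ∑ ω, ξ ω * h ω s with hg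
    -- Pbᵀ acts as the mixture of the (Phat ω)ᵀ
    have hPbT : ∀ (x : S → ℝ) (s : S), (Pbᵀ *ᵥ x) s = ∑ ω, ξ ω * ((Phat ω)ᵀ *ᵥ x) s := by
      intro x s
      simp only [Matrix.mulVec, dotProduct, Matrix.transpose_apply, hPbapp,
        Finset.sum_mul, Finset.mul_sum, mul_assoc]
      rw [Finset.sum_comm]
    -- fixed point for g
    have hgfp : ∀ s, g s = p0 s + γ * ∑ ω, ξ ω * ((Phat ω)ᵀ *ᵥ h ω) s := by
      intro s
      calc g s = ∑ ω, ξ ω * (p0 s + γ * ((Phat ω)ᵀ *ᵥ h ω) s) := by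
            refine Finset.sum_congr rfl fun ω _ => ?_
            congr 1
            conv_lhs => rw [hfp ω]
            simp
        _ = (∑ ω, ξ ω) * p0 s + γ * ∑ ω, ξ ω * ((Phat ω)ᵀ *ᵥ h ω) s := by
            rw [Finset.sum_mul, Finset.mul_sum, ← Finset.sum_add_distrib]
            refine Finset.sum_congr rfl fun ω _ => ?_
            ring
        _ = p0 s + γ * ∑ ω, ξ ω * ((Phat ω)ᵀ *ᵥ h ω) s := by rw [hξ1, one_mul]
    -- ‖g - h ω‖₁ ≤ ε1
    have hgh : ∀ ω, ∑ s, |g s - h ω s| ≤ ε1 := by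
      intro ω
      have e : ∀ s, g s - h ω s = ∑ ω2, ξ ω2 * (h ω2 s - h ω s) := by
        intro s
        rw [hg]
        simp only [mul_sub, Finset.sum_sub_distrib, ← Finset.sum_mul, hξ1, one_mul]
      calc ∑ s, |g s - h ω s| = ∑ s, |∑ ω2, ξ ω2 * (h ω2 s - h ω s)| := by
            simp only [e]
        _ ≤ ∑ ω2, ξ ω2 * ∑ s, |h ω2 s - h ω s| :=
            aux_l1_convex ξ hξ0 (fun ω2 s => h ω2 s - h ω s)
        _ ≤ ∑ ω2, ξ ω2 * ε1 := Finset.sum_le_sum fun ω2 _ =>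
            mul_le_mul_of_nonneg_left (hε1 ω2 ω) (hξ0 ω2)
        _ = ε1 := by rw [← Finset.sum_mul, hξ1, one_mul]
    -- the defect d
    set d : S → ℝ := fun s => ∑ ω, ξ ω * ((Phat ω)ᵀ *ᵥ (g - h ω)) s with hd
    have hdl1 : ∑ s, |d s| ≤ ε1 := by
      calc ∑ s, |d s| ≤ ∑ ω, ξ ω * ∑ s, |((Phat ω)ᵀ *ᵥ (g - h ω)) s| :=
            aux_l1_convex ξ hξ0 (fun ω s => ((Phat ω)ᵀ *ᵥ (g - h ω)) s)
        _ ≤ ∑ ω, ξ ω * ε1 := by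
            refine Finset.sum_le_sum fun ω _ => mul_le_mul_of_nonneg_left ?_ (hξ0 ω)
            refine le_trans (aux_l1_contract (Phat ω) (hPhat ω).1 (hPhat ω).2 _) ?_
            simpa using hgh ω
        _ = ε1 := by rw [← Finset.sum_mul, hξ1, one_mul]
    -- recursion for D := hbar - g
    have hDrec : ∀ s, hbar s - g s = γ * ((Pbᵀ *ᵥ (hbar - g)) s + d s) := by
      intro s
      have e1 : hbar s = p0 s + γ * (Pbᵀ *ᵥ hbar) s := by
        conv_lhs => rw [hbfp]
        simp
      have e2 : (Pbᵀ *ᵥ hbar) s = (Pbᵀ *ᵥ (hbar - g)) s + (Pbᵀ *ᵥ g) s := by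
        rw [Matrix.mulVec_sub]; simp
      have e3 : (Pbᵀ *ᵥ g) s = ∑ ω, ξ ω * ((Phat ω)ᵀ *ᵥ g) s := hPbT g s
      have e4 : d s = ∑ ω, ξ ω * ((Phat ω)ᵀ *ᵥ g) s - ∑ ω, ξ ω * ((Phat ω)ᵀ *ᵥ h ω) s := by
        rw [hd]
        simp only [Matrix.mulVec_sub, Pi.sub_apply, mul_sub, Finset.sum_sub_distrib]
      have e5 := hgfp s
      rw [e1, e5, e2, e3, e4]
      ring
    have hDl1 : ∑ s, |hbar s - g s| ≤ γ * ε1 / (1 - γ) := by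
      have hb : ∑ s, |hbar s - g s| ≤ γ * ∑ s, |hbar s - g s| + γ * ε1 := by
        calc ∑ s, |hbar s - g s| = ∑ s, |γ * ((Pbᵀ *ᵥ (hbar - g)) s + d s)| := by
              simp only [hDrec]
          _ = γ * ∑ s, |(Pbᵀ *ᵥ (hbar - g)) s + d s| := by
              rw [Finset.mul_sum]
              exact Finset.sum_congr rfl fun s _ => by rw [abs_mul, abs_of_nonneg hγ0]
          _ ≤ γ * (∑ s, (|(Pbᵀ *ᵥ (hbar - g)) s| + |d s|)) := by
              refine mul_le_mul_of_nonneg_left (Finset.sum_le_sum fun s _ => abs_add_le _ _) hγ0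
          _ = γ * (∑ s, |(Pbᵀ *ᵥ (hbar - g)) s|) + γ * ∑ s, |d s| := by
              rw [Finset.sum_add_distrib, mul_add]
          _ ≤ γ * ∑ s, |hbar s - g s| + γ * ε1 := by
              have c1 := aux_l1_contract Pb hPb0 hPb1 (hbar - g)
              have c1' : ∑ s, |(Pbᵀ *ᵥ (hbar - g)) s| ≤ ∑ s, |hbar s - g s| := by
                simpa using c1
              have := mul_le_mul_of_nonneg_left c1' hγ0
              have := mul_le_mul_of_nonneg_left hdl1 hγ0
              gcongr
      rw [div_eq_mul_one_div, ← div_eq_mul_one_div, le_div_iff₀ h1γ]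
      nlinarith
    -- assemble
    refine ⟨∑ s, hbar s * r s, hdyn, hbM, ?_⟩
    have e6 : aval ξ = ∑ s, g s * r s := by
      rw [haval, hg]
      simp only [Finset.sum_mul, mul_assoc]
      rw [Finset.sum_comm]
      simp [Finset.mul_sum]
    have e7 : (∑ s, hbar s * r s) - aval ξ = ∑ s, (hbar s - g s) * r s := by
      rw [e6, ← Finset.sum_sub_distrib]
      exact Finset.sum_congr rfl fun s _ => by ring
    rw [e7]
    refine le_trans (dotb _) ?_
    calc rmax * ∑ s, |hbar s - g s| ≤ rmax * (γ * ε1 / (1 - γ)) :=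
          mul_le_mul_of_nonneg_left hDl1 hrmax
      _ = γ * rmax / (1 - γ) * ε1 := by ring
  -- sets and their properties
  set A := {v : ℝ | ∃ ξ ∈ Ξ, v = ∑ ω, ξ ω * ∑ s, p0 s * ((1 - γ • Phat ω)⁻¹).mulVec r s}
    with hA
  set B := {v : ℝ | ∃ ξ ∈ Ξ, v =
      ∑ s, p0 s * ((1 - γ • (∑ ω, ξ ω • Phat ω))⁻¹).mulVec r s} with hB
  have hAval : ∀ ξ ∈ Ξ, (∑ ω, ξ ω * ∑ s, p0 s * ((1 - γ • Phat ω)⁻¹).mulVec r s) = aval ξ := by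
    intro ξ hξ
    exact Finset.sum_congr rfl fun ω _ => by rw [hstat ω]
  have hAne : A.Nonempty := by
    obtain ⟨ξ0, hξ0⟩ := hΞne
    exact ⟨_, ξ0, hξ0, rfl⟩
  have hBne : B.Nonempty := by
    obtain ⟨ξ0, hξ0⟩ := hΞne
    exact ⟨_, ξ0, hξ0, rfl⟩
  have hAbdd : BddBelow A := by
    refine ⟨-M, fun v hv => ?_⟩
    obtain ⟨ξ, hξ, rfl⟩ := hv
    rw [hAval ξ hξ]
    have := havalb ξ hξ
    rw [abs_le] at this
    linarith [this.1]
  have hBbdd : BddBelow B := by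
    refine ⟨-M, fun v hv => ?_⟩
    obtain ⟨ξ, hξ, rfl⟩ := hv
    obtain ⟨b, hbeq, hbM, -⟩ := keyD ξ hξ
    rw [hbeq]
    rw [abs_le] at hbM
    linarith [hbM.1]
  set c : ℝ := γ * rmax / (1 - γ) * ε1 with hc
  -- ρD - c ≤ ρS
  have h1 : ρD - c ≤ ρS := by
    rw [hρS]
    refine le_csInf hAne ?_
    rintro v ⟨ξ, hξ, rfl⟩
    obtain ⟨b, hbeq, -, hbdiff⟩ := keyD ξ hξ
    have hmem : b ∈ B := ⟨ξ, hξ, hbeq.symm⟩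
    have h2 : ρD ≤ b := by rw [hρD]; exact csInf_le hBbdd hmem
    rw [hAval ξ hξ]
    rw [abs_le] at hbdiff
    linarith [hbdiff.1]
  -- ρS - c ≤ ρD
  have h2 : ρS - c ≤ ρD := by
    rw [hρD]
    refine le_csInf hBne ?_
    rintro v ⟨ξ, hξ, rfl⟩
    obtain ⟨b, hbeq, -, hbdiff⟩ := keyD ξ hξ
    have hmem : aval ξ ∈ A := ⟨ξ, hξ, (hAval ξ hξ).symm⟩
    have h3 : ρS ≤ aval ξ := by rw [hρS]; exact csInf_le hAbdd hmem
    rw [hbeq]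
    rw [abs_le] at hbdiff
    linarith [hbdiff.2]
  rw [abs_le]
  constructor <;> linarith
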